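/- For every κ > 0, R > 0 and 1/2 < q < 1 there exists a constant C = C(κ,R,q) > 0 such that for all t ≥ 1 one has ∫_{−R}^{R} e^{−tκτ²} (4κ²τ² + 1)^{1/2} (κ²τ⁴ + τ²)^{q−1} dτ ≤ C t^{(1−2q)/2}. -/

import Mathlib

open MeasureTheory

lemma aux_integrable_gauss {b r : ℝ} (hb : 0 < b) (hr : -1 < 2 * r) :
    Integrable fun x : ℝ => Real.exp (-(b * x ^ 2)) * (x ^ 2) ^ r := by
  have base : Integrable fun x : ℝ => x ^ (2 * r) * Real.exp (-b * x ^ 2) :=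
    integrable_rpow_mul_exp_neg_mul_sq hb hr
  have h1 : IntegrableOn (fun x : ℝ => Real.exp (-(b * x ^ 2)) * (x ^ 2) ^ r) (Set.Ioi 0) := by
    refine base.integrableOn.congr_fun (fun x hx => ?_) measurableSet_Ioi
    have hx0 : (0:ℝ) ≤ x := le_of_lt hx
    have h2 : (x ^ 2) ^ r = x ^ (2 * r) := by
      rw [← Real.rpow_natCast x 2, ← Real.rpow_mul hx0]
      norm_num
    dsimp only
    rw [h2, neg_mul, mul_comm]
  rw [← integrableOn_univ, ← @Set.Iio_union_Ici _ _ (0 : ℝ), integrableOn_union,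
    integrableOn_Ici_iff_integrableOn_Ioi]
  refine ⟨?_, h1⟩
  rw [← (Measure.measurePreserving_neg (volume : Measure ℝ)).integrableOn_comp_preimage
      (Homeomorph.neg ℝ).measurableEmbedding]
  simp only [Function.comp_def, neg_sq, Set.neg_preimage, Set.neg_Iio, neg_neg, neg_zero]
  exact h1

theorem stmt_15 (κ R q : ℝ) (hκ : 0 < κ) (hR : 0 < R)
    (hq1 : 1 / 2 < q) (hq2 : q < 1) :
    ∃ C : ℝ, 0 < C ∧ ∀ t : ℝ, 1 ≤ t →
      (∫ τ in (-R)..R, Real.exp (-t * κ * τ ^ 2) *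
        (4 * κ ^ 2 * τ ^ 2 + 1) ^ ((1:ℝ) / 2) * (κ ^ 2 * τ ^ 4 + τ ^ 2) ^ (q - 1))
        ≤ C * t ^ ((1 - 2 * q) / 2) := by
  have hr : -1 < 2 * (q - 1) := by linarith
  set M : ℝ := (4 * κ ^ 2 * R ^ 2 + 1) ^ ((1:ℝ) / 2) with hM
  have hM0 : 0 < M := Real.rpow_pos_of_pos (by positivity) _
  set F : ℝ → ℝ := fun x => Real.exp (-(κ * x ^ 2)) * (x ^ 2) ^ (q - 1) with hF
  have hFint : Integrable F := aux_integrable_gauss hκ hr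
  have hFnn : ∀ x, 0 ≤ F x := fun x => mul_nonneg (Real.exp_nonneg _) (Real.rpow_nonneg (by positivity) _)
  set I : ℝ := ∫ x, F x with hI
  have hI0 : 0 ≤ I := integral_nonneg hFnn
  refine ⟨M * I + 1, by positivity, fun t ht => ?_⟩
  have ht0 : (0:ℝ) < t := lt_of_lt_of_le one_pos ht
  -- dominating function
  set g : ℝ → ℝ := fun τ => M * (Real.exp (-t * κ * τ ^ 2) * (τ ^ 2) ^ (q - 1)) with hg
  have hgint : IntervalIntegrable g volume (-R) R := by
    have : Integrable fun x : ℝ => Real.exp (-(t * κ * x ^ 2)) * (x ^ 2) ^ (q - 1) :=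
      aux_integrable_gauss (by positivity) hr
    have := (this.const_mul M).intervalIntegrable (a := -R) (b := R)
    simpa only [hg, neg_mul, mul_assoc] using this
  have hgnn : ∀ x, 0 ≤ g x := fun x =>
    mul_nonneg hM0.le (mul_nonneg (Real.exp_nonneg _) (Real.rpow_nonneg (by positivity) _))
  -- pointwise bound on Icc (-R) R
  have hbound : ∀ x ∈ Set.Icc (-R) R,
      Real.exp (-t * κ * x ^ 2) * (4 * κ ^ 2 * x ^ 2 + 1) ^ ((1:ℝ) / 2)
        * (κ ^ 2 * x ^ 4 + x ^ 2) ^ (q - 1) ≤ g x := by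
    intro x hx
    have hx2 : x ^ 2 ≤ R ^ 2 := by
      obtain ⟨h1, h2⟩ := hx; nlinarith
    have e1 : (4 * κ ^ 2 * x ^ 2 + 1) ^ ((1:ℝ) / 2) ≤ M :=
      Real.rpow_le_rpow (by positivity) (by nlinarith) (by norm_num)
    have e2 : (κ ^ 2 * x ^ 4 + x ^ 2) ^ (q - 1) ≤ (x ^ 2) ^ (q - 1) := by
      rcases eq_or_ne x 0 with h | h
      · simp [h, Real.zero_rpow (show q - 1 ≠ 0 by intro hc; linarith [sub_eq_zero.mp hc])]
      · have hx2pos : 0 < x ^ 2 := (sq_nonneg x).lt_of_ne' (pow_ne_zero 2 h)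
        exact Real.rpow_le_rpow_of_nonpos hx2pos (by nlinarith [sq_nonneg (κ * x ^ 2)]) (by linarith)
    calc Real.exp (-t * κ * x ^ 2) * (4 * κ ^ 2 * x ^ 2 + 1) ^ ((1:ℝ) / 2)
          * (κ ^ 2 * x ^ 4 + x ^ 2) ^ (q - 1)
        ≤ Real.exp (-t * κ * x ^ 2) * M * (x ^ 2) ^ (q - 1) := by
          refine mul_le_mul (mul_le_mul_of_nonneg_left e1 (Real.exp_nonneg _)) e2
            (Real.rpow_nonneg (by positivity) _)
            (mul_nonneg (Real.exp_nonneg _) hM0.le)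
      _ = g x := by rw [hg]; ring
  -- integrability of the original integrand
  have hfint : IntervalIntegrable (fun τ : ℝ => Real.exp (-t * κ * τ ^ 2) *
      (4 * κ ^ 2 * τ ^ 2 + 1) ^ ((1:ℝ) / 2) * (κ ^ 2 * τ ^ 4 + τ ^ 2) ^ (q - 1))
      volume (-R) R := by
    refine hgint.mono_fun ?_ ?_
    · apply Measurable.aestronglyMeasurable
      fun_prop
    · filter_upwards [ae_restrict_mem measurableSet_uIoc] with x hx
      have hx' : x ∈ Set.Icc (-R) R := by
        rw [← Set.uIcc_of_le (by linarith : -R ≤ R)]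
        exact Set.uIoc_subset_uIcc hx
      have hfnn : 0 ≤ Real.exp (-t * κ * x ^ 2) * (4 * κ ^ 2 * x ^ 2 + 1) ^ ((1:ℝ) / 2)
          * (κ ^ 2 * x ^ 4 + x ^ 2) ^ (q - 1) := by positivity
      simp only [Real.norm_eq_abs, abs_of_nonneg hfnn, abs_of_nonneg (hgnn x)]
      exact hbound x hx'
  -- substitution
  set c : ℝ := Real.sqrt t with hc
  have hc0 : 0 < c := Real.sqrt_pos.mpr ht0
  have hc2 : c ^ 2 = t := Real.sq_sqrt ht0.le
  have sub1 : ∀ τ : ℝ, F (c * τ) =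
      t ^ (q - 1) * (Real.exp (-t * κ * τ ^ 2) * (τ ^ 2) ^ (q - 1)) := by
    intro τ
    have h1 : (c * τ) ^ 2 = t * τ ^ 2 := by rw [mul_pow, hc2]
    rw [hF]
    simp only [h1]
    rw [Real.mul_rpow ht0.le (by positivity)]
    ring_nf
  have sub2 : (∫ τ in (-R)..R, F (c * τ)) = c⁻¹ * ∫ u in (c * -R)..(c * R), F u := by
    rw [intervalIntegral.integral_comp_mul_left F hc0.ne', smul_eq_mul]
  have sub3 : (∫ u in (c * -R)..(c * R), F u) ≤ I := by
    rw [intervalIntegral.integral_of_le (by nlinarith : c * -R ≤ c * R)]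
    exact setIntegral_le_integral hFint (Filter.Eventually.of_forall hFnn)
  have sub4 : (∫ τ in (-R)..R, F (c * τ)) =
      t ^ (q - 1) * ∫ τ in (-R)..R, Real.exp (-t * κ * τ ^ 2) * (τ ^ 2) ^ (q - 1) := by
    simp_rw [sub1]
    rw [intervalIntegral.integral_const_mul]
  have htq : (0:ℝ) < t ^ (q - 1) := Real.rpow_pos_of_pos ht0 _
  have X_le : (∫ τ in (-R)..R, Real.exp (-t * κ * τ ^ 2) * (τ ^ 2) ^ (q - 1))
      ≤ t ^ ((1 - 2 * q) / 2) * I := by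
    have h1 : t ^ (q - 1) * (∫ τ in (-R)..R, Real.exp (-t * κ * τ ^ 2) * (τ ^ 2) ^ (q - 1))
        ≤ c⁻¹ * I := by
      rw [← sub4, sub2]
      exact mul_le_mul_of_nonneg_left sub3 (by positivity)
    have hcinv : c⁻¹ = t ^ (-(1:ℝ)/2) := by
      rw [hc, Real.sqrt_eq_rpow, ← Real.rpow_neg ht0.le]
      norm_num
    have key : t ^ ((1 - 2 * q) / 2) = (t ^ (q - 1))⁻¹ * t ^ (-(1:ℝ)/2) := by
      rw [← Real.rpow_neg ht0.le, ← Real.rpow_add ht0]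
      ring_nf
    rw [hcinv] at h1
    rw [key]
    calc (∫ τ in (-R)..R, Real.exp (-t * κ * τ ^ 2) * (τ ^ 2) ^ (q - 1))
        = (t ^ (q - 1))⁻¹ * (t ^ (q - 1) *
            ∫ τ in (-R)..R, Real.exp (-t * κ * τ ^ 2) * (τ ^ 2) ^ (q - 1)) := by
          rw [← mul_assoc, inv_mul_cancel₀ htq.ne', one_mul]
      _ ≤ (t ^ (q - 1))⁻¹ * (t ^ (-(1:ℝ)/2) * I) := by
          exact mul_le_mul_of_nonneg_left h1 (by positivity)
      _ = (t ^ (q - 1))⁻¹ * t ^ (-(1:ℝ)/2) * I := by ring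
  calc (∫ τ in (-R)..R, Real.exp (-t * κ * τ ^ 2) *
        (4 * κ ^ 2 * τ ^ 2 + 1) ^ ((1:ℝ) / 2) * (κ ^ 2 * τ ^ 4 + τ ^ 2) ^ (q - 1))
      ≤ ∫ τ in (-R)..R, g τ :=
        intervalIntegral.integral_mono_on (by linarith) hfint hgint hbound
    _ = M * ∫ τ in (-R)..R, Real.exp (-t * κ * τ ^ 2) * (τ ^ 2) ^ (q - 1) := by
        rw [hg, intervalIntegral.integral_const_mul]
    _ ≤ M * (t ^ ((1 - 2 * q) / 2) * I) := mul_le_mul_of_nonneg_left X_le hM0.le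
    _ ≤ (M * I + 1) * t ^ ((1 - 2 * q) / 2) := by
        have hpos : (0:ℝ) < t ^ ((1 - 2 * q) / 2) := Real.rpow_pos_of_pos ht0 _
        nlinarith
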